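/- Let R be a commutative unital ring and A, B two R-modules. For every natural number n there is an R-module isomorphism Λ^n(A ⊕ B) ≅ ⊕_{i+j=n} Λ^i(A) ⊗_R Λ^j(B), induced by concatenation of pure tensors: (a_1 ⊗ ⋯ ⊗ a_i) ⊗ (b_1 ⊗ ⋯ ⊗ b_j) ↦ a_1 ⊗ ⋯ ⊗ a_i ⊗ b_1 ⊗ ⋯ ⊗ b_j. -/

import Mathlib

open TensorProduct PiTensorProduct

/-- The submodule of alternating relations in the `n`-th tensor power. -/
abbrev ExtRel (R : Type*) [CommRing R] (M : Type*) [AddCommGroup M] [Module R M] (n : ℕ) :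
    Submodule R (TensorPower R n M) :=
  Submodule.span R {x | ∃ m : Fin n → M,
    (∃ i j : Fin n, i ≠ j ∧ m i = m j) ∧ x = tprod R m}

/-- The `n`-th exterior power
`Λ^n M = T^n M / ⟨m_1⊗⋯⊗m_n : m_i = m_j for some i ≠ j⟩`. -/
abbrev ExtPow (R : Type*) [CommRing R] (M : Type*) [AddCommGroup M] [Module R M] (n : ℕ) :=
  TensorPower R n M ⧸ ExtRel R M n

noncomputable section Phi
variable (R : Type) [CommRing R] (A B M : Type) [AddCommGroup A] [Module R A]
    [AddCommGroup B] [Module R B] [AddCommGroup M] [Module R M]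

def catMap (p q : ℕ) :
    TensorPower R p A ⊗[R] TensorPower R q B →ₗ[R] TensorPower R (p + q) (A × B) :=
  (reindex R (fun _ : Fin p ⊕ Fin q => A × B) finSumFinEquiv).toLinearMap ∘ₗ
    (tmulEquiv R (A × B)).toLinearMap ∘ₗ
      TensorProduct.map (PiTensorProduct.map fun _ => LinearMap.inl R A B)
        (PiTensorProduct.map fun _ => LinearMap.inr R A B)

lemma sum_elim_finSumFinEquiv_symm {p q : ℕ} {γ : Type*} (u : Fin p → γ) (w : Fin q → γ)
    (k : Fin (p + q)) : Sum.elim u w (finSumFinEquiv.symm k) = Fin.append u w k := by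
  refine Fin.addCases (fun a => ?_) (fun b => ?_) k <;>
    simp [finSumFinEquiv_symm_apply_castAdd, finSumFinEquiv_symm_apply_natAdd,
      Fin.append_left, Fin.append_right]

lemma catMap_tprod (p q : ℕ) (x : Fin p → A) (y : Fin q → B) :
    catMap R A B p q (PiTensorProduct.tprod R x ⊗ₜ[R] PiTensorProduct.tprod R y)
      = PiTensorProduct.tprod R
          (Fin.append (fun a => ((x a, 0) : A × B)) (fun b => ((0, y b) : A × B))) := by
  simp only [catMap, LinearMap.coe_comp, LinearEquiv.coe_coe, Function.comp_apply,
    TensorProduct.map_tmul, map_tprod, tmulEquiv_apply, reindex_tprod]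
  exact congrArg _ (funext fun k => sum_elim_finSumFinEquiv_symm _ _ k)

variable {p q n : ℕ} (h : p + q = n)

/-- concatenation into the exterior power of the product -/
def catTo : TensorPower R p A ⊗[R] TensorPower R q B →ₗ[R] ExtPow R (A × B) n :=
  (ExtRel R (A × B) n).mkQ ∘ₗ
    (reindex R (fun _ : Fin (p + q) => A × B) (finCongr h)).toLinearMap ∘ₗ catMap R A B p q

lemma catTo_tprod (x : Fin p → A) (y : Fin q → B) :
    catTo R A B h (PiTensorProduct.tprod R x ⊗ₜ[R] PiTensorProduct.tprod R y)
      = Submodule.Quotient.mk (PiTensorProduct.tprod R fun k : Fin n =>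
          Fin.append (fun a => ((x a, 0) : A × B)) (fun b => ((0, y b) : A × B))
            (Fin.cast h.symm k)) := by
  simp only [catTo, LinearMap.coe_comp, LinearEquiv.coe_coe, Function.comp_apply,
    catMap_tprod, reindex_tprod, Submodule.mkQ_apply]
  rfl

lemma catTo_zero_left (x : Fin p → A) (y : Fin q → B)
    (hx : ∃ i j : Fin p, i ≠ j ∧ x i = x j) :
    catTo R A B h (PiTensorProduct.tprod R x ⊗ₜ[R] PiTensorProduct.tprod R y) = 0 := by
  obtain ⟨i, j, hij, hxx⟩ := hx
  rw [catTo_tprod, Submodule.Quotient.mk_eq_zero]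
  refine Submodule.subset_span ⟨_, ⟨Fin.cast h (Fin.castAdd q i), Fin.cast h (Fin.castAdd q j),
    ?_, ?_⟩, rfl⟩
  · simp only [ne_eq, Fin.ext_iff, Fin.coe_cast, Fin.coe_castAdd]
    exact fun hc => hij (Fin.ext hc)
  · have : ∀ i : Fin p, Fin.cast h.symm (Fin.cast h (Fin.castAdd q i)) = Fin.castAdd q i :=
      fun _ => rfl
    rw [this, this, Fin.append_left, Fin.append_left, hxx]

lemma catTo_zero_right (x : Fin p → A) (y : Fin q → B)
    (hy : ∃ i j : Fin q, i ≠ j ∧ y i = y j) :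
    catTo R A B h (PiTensorProduct.tprod R x ⊗ₜ[R] PiTensorProduct.tprod R y) = 0 := by
  obtain ⟨i, j, hij, hyy⟩ := hy
  rw [catTo_tprod, Submodule.Quotient.mk_eq_zero]
  refine Submodule.subset_span ⟨_, ⟨Fin.cast h (Fin.natAdd p i), Fin.cast h (Fin.natAdd p j),
    ?_, ?_⟩, rfl⟩
  · simp only [ne_eq, Fin.ext_iff, Fin.coe_cast, Fin.coe_natAdd]
    exact fun hc => hij (Fin.ext (by omega))
  · have : ∀ i : Fin q, Fin.cast h.symm (Fin.cast h (Fin.natAdd p i)) = Fin.natAdd p i :=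
      fun _ => rfl
    rw [this, this, Fin.append_right, Fin.append_right, hyy]

/-- `catTo` descends to the quotient in the second factor, for each `x : T^p A`. -/
def phiHalf : TensorPower R p A →ₗ[R] (ExtPow R B q →ₗ[R] ExtPow R (A × B) n) where
  toFun x := Submodule.liftQ _ ((catTo R A B h) ∘ₗ (TensorProduct.mk R _ _ x))
    (by
      rw [Submodule.span_le]
      rintro _ ⟨y, ⟨i, j, hij, hyy⟩, rfl⟩
      simp only [SetLike.mem_coe, LinearMap.mem_ker, LinearMap.coe_comp, Function.comp_apply,
        TensorProduct.mk_apply]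
      induction x using PiTensorProduct.induction_on with
      | smul_tprod r xx =>
        rw [← TensorProduct.smul_tmul', map_smul, catTo_zero_right R A B h xx y ⟨i, j, hij, hyy⟩,
          smul_zero]
      | add u v hu hv => rw [TensorProduct.add_tmul, map_add, hu, hv, add_zero])
  map_add' u v := by
    refine Submodule.linearMap_qext _ ?_
    ext y
    simp only [LinearMap.coe_comp, Function.comp_apply, Submodule.mkQ_apply,
      LinearMap.compMultilinearMap_apply, Submodule.liftQ_apply, TensorProduct.mk_apply,
      LinearMap.add_apply]
    rw [TensorProduct.add_tmul, map_add]
  map_smul' r u := by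
    refine Submodule.linearMap_qext _ ?_
    ext y
    simp only [LinearMap.coe_comp, Function.comp_apply, Submodule.mkQ_apply,
      LinearMap.compMultilinearMap_apply, Submodule.liftQ_apply, TensorProduct.mk_apply,
      RingHom.id_apply, LinearMap.smul_apply]
    rw [← TensorProduct.smul_tmul', map_smul]

lemma phiHalf_apply (x : TensorPower R p A) (y : TensorPower R q B) :
    phiHalf R A B h x (Submodule.Quotient.mk y) = catTo R A B h (x ⊗ₜ[R] y) := rfl

/-- the bilinear version of the concatenation map on exterior powers -/
def phiBil : ExtPow R A p →ₗ[R] (ExtPow R B q →ₗ[R] ExtPow R (A × B) n) :=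
  Submodule.liftQ _ (phiHalf R A B h)
    (by
      rw [Submodule.span_le]
      rintro _ ⟨x, ⟨i, j, hij, hxx⟩, rfl⟩
      simp only [SetLike.mem_coe, LinearMap.mem_ker]
      refine Submodule.linearMap_qext _ ?_
      ext y
      simp only [LinearMap.coe_comp, Function.comp_apply, Submodule.mkQ_apply,
        LinearMap.compMultilinearMap_apply, LinearMap.zero_comp, LinearMap.zero_apply]
      rw [phiHalf_apply, catTo_zero_left R A B h x y ⟨i, j, hij, hxx⟩])

/-- concatenation `Λ^p A ⊗ Λ^q B → Λ^n (A×B)` -/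
def phiPart : ExtPow R A p ⊗[R] ExtPow R B q →ₗ[R] ExtPow R (A × B) n :=
  TensorProduct.lift (phiBil R A B h)

lemma phiPart_tprod (x : Fin p → A) (y : Fin q → B) :
    phiPart R A B h (Submodule.Quotient.mk (PiTensorProduct.tprod R x) ⊗ₜ[R]
        Submodule.Quotient.mk (PiTensorProduct.tprod R y))
      = Submodule.Quotient.mk (PiTensorProduct.tprod R fun k : Fin n =>
          Fin.append (fun a => ((x a, 0) : A × B)) (fun b => ((0, y b) : A × B))
            (Fin.cast h.symm k)) := by
  rw [← catTo_tprod]; rfl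

end Phi

noncomputable section Psi
variable (R : Type) [CommRing R] (A B M : Type) [AddCommGroup A] [Module R A]
    [AddCommGroup B] [Module R B] [AddCommGroup M] [Module R M]

def wedge (n : ℕ) : M [⋀^Fin n]→ₗ[R] ExtPow R M n :=
  { toMultilinearMap := (ExtRel R M n).mkQ.compMultilinearMap (PiTensorProduct.tprod R)
    map_eq_zero_of_eq' := fun v i j h hij => by
      show Submodule.Quotient.mk (PiTensorProduct.tprod R v) = 0
      rw [Submodule.Quotient.mk_eq_zero]
      exact Submodule.subset_span ⟨v, ⟨i, j, hij, h⟩, rfl⟩ }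

@[simp] lemma wedge_apply (n : ℕ) (v : Fin n → M) :
    wedge R M n v = Submodule.Quotient.mk (PiTensorProduct.tprod R v) := rfl

variable {p q n : ℕ} (h : p + q = n)

/-- the canonical equivalence `Fin p ⊕ Fin q ≃ Fin n` -/
def eqv : Fin p ⊕ Fin q ≃ Fin n := finSumFinEquiv.trans (finCongr h)

lemma eqv_inl_val (a : Fin p) : ((eqv h (Sum.inl a)) : Fin n).val = a.val := by
  simp [eqv]

lemma eqv_inr_val (b : Fin q) : ((eqv h (Sum.inr b)) : Fin n).val = p + b.val := by
  simp [eqv]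

/-- the alternating map underlying one component of the inverse -/
def psiAlt : (A × B) [⋀^Fin n]→ₗ[R] (ExtPow R A p ⊗[R] ExtPow R B q) :=
  (((wedge R A p).compLinearMap (LinearMap.fst R A B)).domCoprod
      ((wedge R B q).compLinearMap (LinearMap.snd R A B))).domDomCongr (eqv h)

/-- one component of the inverse map -/
def psiPart : ExtPow R (A × B) n →ₗ[R] ExtPow R A p ⊗[R] ExtPow R B q :=
  Submodule.liftQ _ (PiTensorProduct.lift (psiAlt R A B h).toMultilinearMap)
    (by
      rw [Submodule.span_le]
      rintro _ ⟨v, ⟨i, j, hij, hvv⟩, rfl⟩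
      simp only [SetLike.mem_coe, LinearMap.mem_ker, PiTensorProduct.lift.tprod]
      exact (psiAlt R A B h).map_eq_zero_of_eq v hvv hij)

lemma psiPart_tprod (v : Fin n → A × B) :
    psiPart R A B h (Submodule.Quotient.mk (PiTensorProduct.tprod R v))
      = psiAlt R A B h v := by
  rw [psiPart, Submodule.liftQ_apply, PiTensorProduct.lift.tprod]
  rfl

end Psi

noncomputable section Eval
variable (R : Type) [CommRing R] (A B : Type) [AddCommGroup A] [Module R A]
    [AddCommGroup B] [Module R B]

variable {p q n : ℕ}

/-- the concatenated family in `A × B` -/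
def famF (x : Fin p → A) (y : Fin q → B) (h : p + q = n) : Fin n → A × B :=
  fun k => Fin.append (fun a => ((x a, 0) : A × B)) (fun b => ((0, y b) : A × B))
    (Fin.cast h.symm k)

variable (h : p + q = n) (x : Fin p → A) (y : Fin q → B)

lemma famF_fst (k : Fin n) (hk : p ≤ k.val) : (famF A B x y h k).1 = 0 := by
  obtain ⟨m, rfl⟩ : ∃ m : Fin (p + q), k = Fin.cast h m := ⟨Fin.cast h.symm k, rfl⟩
  have hm : p ≤ m.val := hk
  revert hm
  refine Fin.addCases (fun a => ?_) (fun b => ?_) m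
  · intro ha
    simp only [Fin.coe_castAdd] at ha
    exact absurd a.isLt (by omega)
  · intro _
    show (Fin.append (fun a => ((x a, 0) : A × B)) (fun b => ((0, y b) : A × B))
      (Fin.cast h.symm (Fin.cast h (Fin.natAdd p b)))).1 = 0
    have : Fin.cast h.symm (Fin.cast h (Fin.natAdd p b)) = Fin.natAdd p b := rfl
    rw [this, Fin.append_right]

lemma famF_snd (k : Fin n) (hk : k.val < p) : (famF A B x y h k).2 = 0 := by
  obtain ⟨m, rfl⟩ : ∃ m : Fin (p + q), k = Fin.cast h m := ⟨Fin.cast h.symm k, rfl⟩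
  have hm : m.val < p := hk
  revert hm
  refine Fin.addCases (fun a => ?_) (fun b => ?_) m
  · intro _
    show (Fin.append (fun a => ((x a, 0) : A × B)) (fun b => ((0, y b) : A × B))
      (Fin.cast h.symm (Fin.cast h (Fin.castAdd q a)))).2 = 0
    have : Fin.cast h.symm (Fin.cast h (Fin.castAdd q a)) = Fin.castAdd q a := rfl
    rw [this, Fin.append_left]
  · intro hb
    simp only [Fin.coe_natAdd] at hb
    exact absurd hb (by omega)

lemma famF_left (a : Fin p) :
    famF A B x y h (Fin.cast h (Fin.castAdd q a)) = (x a, 0) := by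
  show Fin.append (fun a => ((x a, 0) : A × B)) (fun b => ((0, y b) : A × B))
      (Fin.cast h.symm (Fin.cast h (Fin.castAdd q a))) = _
  have : Fin.cast h.symm (Fin.cast h (Fin.castAdd q a)) = Fin.castAdd q a := rfl
  rw [this, Fin.append_left]

lemma famF_right (b : Fin q) :
    famF A B x y h (Fin.cast h (Fin.natAdd p b)) = (0, y b) := by
  show Fin.append (fun a => ((x a, 0) : A × B)) (fun b => ((0, y b) : A × B))
      (Fin.cast h.symm (Fin.cast h (Fin.natAdd p b))) = _
  have : Fin.cast h.symm (Fin.cast h (Fin.natAdd p b)) = Fin.natAdd p b := rfl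
  rw [this, Fin.append_right]

variable {p' q' : ℕ} (h' : p' + q' = n)

end Eval

noncomputable section Eval2
variable (R : Type) [CommRing R] (A B : Type) [AddCommGroup A] [Module R A]
    [AddCommGroup B] [Module R B]
variable {p q n p' q' : ℕ} (h : p + q = n) (h' : p' + q' = n)
  (x : Fin p → A) (y : Fin q → B)

lemma summand_apply (σ : Equiv.Perm (Fin p' ⊕ Fin q')) (v : Fin n → A × B) :
    AlternatingMap.domCoprod.summand ((wedge R A p').compLinearMap (LinearMap.fst R A B))
      ((wedge R B q').compLinearMap (LinearMap.snd R A B)) (Quotient.mk'' σ)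
      (v ∘ (eqv h' : Fin p' ⊕ Fin q' ≃ Fin n))
    = Equiv.Perm.sign σ •
      ((Submodule.Quotient.mk (PiTensorProduct.tprod R
          fun s => (v (eqv h' (σ (Sum.inl s)))).1) : ExtPow R A p') ⊗ₜ[R]
       (Submodule.Quotient.mk (PiTensorProduct.tprod R
          fun s => (v (eqv h' (σ (Sum.inr s)))).2) : ExtPow R B q')) := by
  rw [AlternatingMap.domCoprod.summand_mk'']
  rfl

lemma summand_zero_left (σ : Equiv.Perm (Fin p' ⊕ Fin q'))
    (hs : ∃ s : Fin p', p ≤ (eqv h' (σ (Sum.inl s))).val) :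
    AlternatingMap.domCoprod.summand ((wedge R A p').compLinearMap (LinearMap.fst R A B))
      ((wedge R B q').compLinearMap (LinearMap.snd R A B)) (Quotient.mk'' σ)
      ((famF A B x y h) ∘ (eqv h' : Fin p' ⊕ Fin q' ≃ Fin n)) = 0 := by
  obtain ⟨s, hs⟩ := hs
  rw [summand_apply]
  have hz : (famF A B x y h (eqv h' (σ (Sum.inl s)))).1 = 0 := famF_fst A B h x y _ hs
  have : PiTensorProduct.tprod R (fun s => (famF A B x y h (eqv h' (σ (Sum.inl s)))).1) = 0 :=
    MultilinearMap.map_coord_zero _ s hz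
  rw [this]
  simp
  exact zsmul_zero _

lemma summand_zero_right (σ : Equiv.Perm (Fin p' ⊕ Fin q'))
    (hs : ∃ s : Fin q', (eqv h' (σ (Sum.inr s))).val < p) :
    AlternatingMap.domCoprod.summand ((wedge R A p').compLinearMap (LinearMap.fst R A B))
      ((wedge R B q').compLinearMap (LinearMap.snd R A B)) (Quotient.mk'' σ)
      ((famF A B x y h) ∘ (eqv h' : Fin p' ⊕ Fin q' ≃ Fin n)) = 0 := by
  obtain ⟨s, hs⟩ := hs
  rw [summand_apply]
  have hz : (famF A B x y h (eqv h' (σ (Sum.inr s)))).2 = 0 := famF_snd A B h x y _ hs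
  have : PiTensorProduct.tprod R (fun s => (famF A B x y h (eqv h' (σ (Sum.inr s)))).2) = 0 :=
    MultilinearMap.map_coord_zero _ s hz
  rw [this]
  simp
  exact zsmul_zero _

lemma count_left {σ : Equiv.Perm (Fin p' ⊕ Fin q')}
    (hL : ∀ s : Fin p', (eqv h' (σ (Sum.inl s))).val < p) : p' ≤ p := by
  have hinj : Function.Injective (fun s : Fin p' => (⟨(eqv h' (σ (Sum.inl s))).val, hL s⟩ : Fin p)) := by
    intro s t hst
    simp only [Fin.mk.injEq] at hst
    have : eqv h' (σ (Sum.inl s)) = eqv h' (σ (Sum.inl t)) := Fin.ext hst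
    have := (eqv h').injective this
    have := σ.injective this
    exact Sum.inl_injective this
  simpa using Fintype.card_le_of_injective _ hinj

lemma count_right (hpq : p + q = n) {σ : Equiv.Perm (Fin p' ⊕ Fin q')}
    (hR : ∀ s : Fin q', p ≤ (eqv h' (σ (Sum.inr s))).val) : q' ≤ q := by
  have hlt : ∀ s : Fin q', (eqv h' (σ (Sum.inr s))).val - p < q := by
    intro s
    have h1 := (eqv h' (σ (Sum.inr s))).isLt
    have h2 := hR s
    omega
  have hinj : Function.Injective
      (fun s : Fin q' => (⟨(eqv h' (σ (Sum.inr s))).val - p, hlt s⟩ : Fin q)) := by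
    intro s t hst
    have hv : (eqv h' (σ (Sum.inr s))).val = (eqv h' (σ (Sum.inr t))).val := by
      simp only [Fin.mk.injEq] at hst
      have := hR s; have := hR t
      omega
    have : eqv h' (σ (Sum.inr s)) = eqv h' (σ (Sum.inr t)) := Fin.ext hv
    have := (eqv h').injective this
    have := σ.injective this
    exact Sum.inr_injective this
  simpa using Fintype.card_le_of_injective _ hinj

lemma block_trivial (σ : Equiv.Perm (Fin p ⊕ Fin q))
    (hL : ∀ s : Fin p, (eqv h (σ (Sum.inl s))).val < p)
    (hR : ∀ s : Fin q, p ≤ (eqv h (σ (Sum.inr s))).val) :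
    (Quotient.mk'' σ : Equiv.Perm.ModSumCongr (Fin p) (Fin q)) = Quotient.mk'' 1 := by
  have hle : ∀ s : Fin p, ∃ t : Fin p, σ (Sum.inl s) = Sum.inl t := by
    intro s
    rcases hc : σ (Sum.inl s) with t | t
    · exact ⟨t, rfl⟩
    · exfalso
      have := hL s
      rw [hc, eqv_inr_val] at this
      omega
  have hre : ∀ s : Fin q, ∃ t : Fin q, σ (Sum.inr s) = Sum.inr t := by
    intro s
    rcases hc : σ (Sum.inr s) with t | t
    · exfalso
      have := hR s
      rw [hc, eqv_inl_val] at this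
      have := t.isLt
      omega
    · exact ⟨t, rfl⟩
  set σL : Fin p → Fin p := fun s => (hle s).choose with hσL
  have hLspec : ∀ s, σ (Sum.inl s) = Sum.inl (σL s) := fun s => (hle s).choose_spec
  set σR : Fin q → Fin q := fun s => (hre s).choose with hσR
  have hRspec : ∀ s, σ (Sum.inr s) = Sum.inr (σR s) := fun s => (hre s).choose_spec
  have hinjL : Function.Injective σL := fun s t hst => by
    have : σ (Sum.inl s) = σ (Sum.inl t) := by rw [hLspec, hLspec, hst]
    exact Sum.inl_injective (σ.injective this)
  have hinjR : Function.Injective σR := fun s t hst => by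
    have : σ (Sum.inr s) = σ (Sum.inr t) := by rw [hRspec, hRspec, hst]
    exact Sum.inr_injective (σ.injective this)
  have hbijL := Finite.injective_iff_bijective.mp hinjL
  have hbijR := Finite.injective_iff_bijective.mp hinjR
  have hσ : σ = Equiv.sumCongr (Equiv.ofBijective σL hbijL) (Equiv.ofBijective σR hbijR) := by
    ext z
    rcases z with s | s
    · simp [hLspec s, Equiv.ofBijective]
    · simp [hRspec s, Equiv.ofBijective]
  refine Quotient.sound' (QuotientGroup.leftRel_apply.mpr ?_)
  refine ⟨((Equiv.ofBijective σL hbijL)⁻¹, (Equiv.ofBijective σR hbijR)⁻¹), ?_⟩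
  rw [Equiv.Perm.sumCongrHom_apply, mul_one, hσ, Equiv.Perm.sumCongr_inv]

end Eval2

noncomputable section Eval3
variable (R : Type) [CommRing R] (A B : Type) [AddCommGroup A] [Module R A]
    [AddCommGroup B] [Module R B]
variable {p q n p' q' : ℕ} (h : p + q = n) (h' : p' + q' = n)
  (x : Fin p → A) (y : Fin q → B)

lemma psiAlt_famF_ne (hpp : p' ≠ p) :
    psiAlt R A B (p := p') (q := q') h' (famF A B x y h) = 0 := by
  rw [psiAlt, AlternatingMap.domDomCongr_apply, AlternatingMap.domCoprod_apply,
    MultilinearMap.sum_apply]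
  letI : Fintype (Quotient (QuotientGroup.leftRel
      (Equiv.Perm.sumCongrHom (Fin p') (Fin q')).range)) := QuotientGroup.fintype _
  refine Finset.sum_eq_zero fun b _ => ?_
  refine Quotient.inductionOn' b fun σ => ?_
  by_cases hc1 : ∃ s : Fin p', p ≤ (eqv h' (σ (Sum.inl s))).val
  · exact summand_zero_left R A B h h' x y σ hc1
  push_neg at hc1
  by_cases hc2 : ∃ s : Fin q', (eqv h' (σ (Sum.inr s))).val < p
  · exact summand_zero_right R A B h h' x y σ hc2
  push_neg at hc2
  have h1 := count_left h' hc1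
  have h2 := count_right h' h hc2
  omega

lemma psiAlt_famF :
    psiAlt R A B (p := p) (q := q) h (famF A B x y h)
      = (Submodule.Quotient.mk (PiTensorProduct.tprod R x) : ExtPow R A p) ⊗ₜ[R]
        (Submodule.Quotient.mk (PiTensorProduct.tprod R y) : ExtPow R B q) := by
  rw [psiAlt, AlternatingMap.domDomCongr_apply, AlternatingMap.domCoprod_apply,
    MultilinearMap.sum_apply]
  letI : Fintype (Quotient (QuotientGroup.leftRel
      (Equiv.Perm.sumCongrHom (Fin p) (Fin q)).range)) := QuotientGroup.fintype _
  refine (Fintype.sum_eq_single (Quotient.mk'' 1) ?other).trans ?main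
  case other =>
    intro b hb
    revert hb
    refine Quotient.inductionOn' b fun σ => ?_
    intro hb
    by_cases hc1 : ∃ s : Fin p, p ≤ (eqv h (σ (Sum.inl s))).val
    · exact summand_zero_left R A B h h x y σ hc1
    push_neg at hc1
    by_cases hc2 : ∃ s : Fin q, (eqv h (σ (Sum.inr s))).val < p
    · exact summand_zero_right R A B h h x y σ hc2
    push_neg at hc2
    exact absurd (block_trivial h σ hc1 hc2) hb
  case main =>
  rw [summand_apply R A B h (1 : Equiv.Perm (Fin p ⊕ Fin q))]
  rw [Equiv.Perm.sign_one, one_smul]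
  congr 2
  · refine congrArg _ (funext fun s => ?_)
    show (famF A B x y h (eqv h ((1 : Equiv.Perm (Fin p ⊕ Fin q)) (Sum.inl s)))).1 = x s
    have he : eqv h (Sum.inl s) = Fin.cast h (Fin.castAdd q s) := by
      refine Fin.ext ?_
      rw [eqv_inl_val]
      rfl
    rw [Equiv.Perm.one_apply, he, famF_left]
  · refine congrArg _ (funext fun s => ?_)
    show (famF A B x y h (eqv h ((1 : Equiv.Perm (Fin p ⊕ Fin q)) (Sum.inr s)))).2 = y s
    have he : eqv h (Sum.inr s) = Fin.cast h (Fin.natAdd p s) := by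
      refine Fin.ext ?_
      rw [eqv_inr_val]
      rfl
    rw [Equiv.Perm.one_apply, he, famF_right]

end Eval3

noncomputable section Main
variable (R : Type) [CommRing R] (A B : Type) [AddCommGroup A] [Module R A]
    [AddCommGroup B] [Module R B] (n : ℕ)

lemma hIJ (i : Fin (n + 1)) : i.val + (n - i.val) = n :=
  Nat.add_sub_cancel' (Nat.lt_succ_iff.mp i.isLt)

/-- the forward map -/
def Phi : (Π i : Fin (n + 1), ExtPow R A i.val ⊗[R] ExtPow R B (n - i.val)) →ₗ[R]
    ExtPow R (A × B) n :=
  LinearMap.lsum R _ R (fun i => phiPart R A B (hIJ n i))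

/-- the inverse map -/
def Psi : ExtPow R (A × B) n →ₗ[R]
    (Π i : Fin (n + 1), ExtPow R A i.val ⊗[R] ExtPow R B (n - i.val)) :=
  LinearMap.pi (fun i => psiPart R A B (hIJ n i))

lemma Phi_single (i : Fin (n + 1)) (z : ExtPow R A i.val ⊗[R] ExtPow R B (n - i.val)) :
    Phi R A B n (Pi.single i z) = phiPart R A B (hIJ n i) z := by
  rw [Phi, LinearMap.lsum_apply, LinearMap.sum_apply]
  rw [Finset.sum_eq_single_of_mem i (Finset.mem_univ _) (fun j _ hj => ?_)]
  · simp
  · simp [LinearMap.comp_apply, Pi.single_eq_of_ne hj]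

/-- ext principle for maps out of `Λ^p A ⊗ Λ^q B` -/
lemma tensor_ext {p q : ℕ} {P : Type} [AddCommGroup P] [Module R P]
    (f g : ExtPow R A p ⊗[R] ExtPow R B q →ₗ[R] P)
    (hfg : ∀ (x : Fin p → A) (y : Fin q → B),
      f (Submodule.Quotient.mk (PiTensorProduct.tprod R x) ⊗ₜ[R]
          Submodule.Quotient.mk (PiTensorProduct.tprod R y))
        = g (Submodule.Quotient.mk (PiTensorProduct.tprod R x) ⊗ₜ[R]
          Submodule.Quotient.mk (PiTensorProduct.tprod R y))) : f = g := by
  refine TensorProduct.ext ?_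
  refine Submodule.linearMap_qext _ ?_
  refine PiTensorProduct.ext ?_
  refine MultilinearMap.ext fun x => ?_
  refine Submodule.linearMap_qext _ ?_
  refine PiTensorProduct.ext ?_
  refine MultilinearMap.ext fun y => ?_
  exact hfg x y

lemma Psi_Phi : (Psi R A B n).comp (Phi R A B n) = LinearMap.id := by
  refine LinearMap.pi_ext fun i z => ?_
  have : ((Psi R A B n).comp (Phi R A B n)) ∘ₗ
        LinearMap.single R (fun i : Fin (n + 1) =>
          ExtPow R A i.val ⊗[R] ExtPow R B (n - i.val)) i
      = LinearMap.single R (fun i : Fin (n + 1) =>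
          ExtPow R A i.val ⊗[R] ExtPow R B (n - i.val)) i := by
    refine tensor_ext R A B (p := i.val) (q := n - i.val)
      (P := Π i : Fin (n + 1), ExtPow R A i.val ⊗[R] ExtPow R B (n - i.val)) _ _ fun x y => ?_
    simp only [LinearMap.comp_apply, LinearMap.single_apply]
    rw [Phi_single]
    rw [phiPart_tprod]
    have hfam : (PiTensorProduct.tprod R fun k : Fin n =>
        Fin.append (fun a => ((x a, 0) : A × B)) (fun b => ((0, y b) : A × B))
          (Fin.cast (hIJ n i).symm k)) = PiTensorProduct.tprod R (famF A B x y (hIJ n i)) := rfl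
    rw [hfam]
    funext j
    simp only [Psi, LinearMap.pi_apply]
    rw [psiPart_tprod]
    by_cases hji : j = i
    · subst hji
      rw [psiAlt_famF, Pi.single_eq_same]
    · rw [psiAlt_famF_ne R A B (hIJ n i) (hIJ n j) x y
        (fun hc => hji (Fin.ext hc)), Pi.single_eq_of_ne hji]
  have := congrArg (fun m => m z) (congrArg DFunLike.coe this)
  simpa using this

end Main

noncomputable section Surj
variable (R : Type) [CommRing R] (A B : Type) [AddCommGroup A] [Module R A]
    [AddCommGroup B] [Module R B] (n : ℕ)

lemma piecewise_mem_range (v : Fin n → A × B) (s : Finset (Fin n)) :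
    (Submodule.Quotient.mk (PiTensorProduct.tprod R
        (s.piecewise (fun k => (((v k).1, 0) : A × B)) (fun k => ((0, (v k).2) : A × B))))
      : ExtPow R (A × B) n) ∈ LinearMap.range (Phi R A B n) := by
  classical
  set a : Fin n → A × B := fun k => (((v k).1, 0) : A × B) with ha
  set b : Fin n → A × B := fun k => ((0, (v k).2) : A × B) with hb
  have hsn : s.card ≤ n := by
    simpa using Finset.card_le_univ s
  set i : Fin (n + 1) := ⟨s.card, by omega⟩ with hi
  have h : (i : ℕ) + (n - (i : ℕ)) = n := hIJ n i
  -- the equivalence sending the left block into `s`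
  have hc : n - (i : ℕ) = sᶜ.card := by
    rw [Finset.card_compl]
    simp [hi]
  set εL : Fin (i : ℕ) ≃ {x : Fin n // x ∈ s} := s.equivFin.symm with hεL
  set εR : Fin (n - (i : ℕ)) ≃ {x : Fin n // ¬ x ∈ s} :=
    (finCongr hc).trans ((sᶜ).equivFin.symm.trans
      (Equiv.subtypeEquivRight (fun x => Finset.mem_compl))) with hεR
  set ε : Fin (i : ℕ) ⊕ Fin (n - (i : ℕ)) ≃ Fin n :=
    (Equiv.sumCongr εL εR).trans (Equiv.sumCompl (· ∈ s)) with hε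
  have hεl : ∀ t : Fin (i : ℕ), ε (Sum.inl t) ∈ s := by
    intro t
    simp only [hε, Equiv.trans_apply, Equiv.sumCongr_apply, Sum.map_inl,
      Equiv.sumCompl_apply_inl]
    exact (εL t).2
  have hεr : ∀ t : Fin (n - (i : ℕ)), ε (Sum.inr t) ∉ s := by
    intro t
    simp only [hε, Equiv.trans_apply, Equiv.sumCongr_apply, Sum.map_inr,
      Equiv.sumCompl_apply_inr]
    exact (εR t).2
  set x : Fin (i : ℕ) → A := fun t => (v (ε (Sum.inl t))).1 with hx
  set y : Fin (n - (i : ℕ)) → B := fun t => (v (ε (Sum.inr t))).2 with hy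
  set τ : Equiv.Perm (Fin n) := (eqv h).symm.trans ε with hτ
  have hfam : famF A B x y h = s.piecewise a b ∘ τ := by
    funext k
    rcases hcase : (eqv h).symm k with t | t
    · have hk : k = eqv h (Sum.inl t) := by
        rw [← hcase]; simp
      have he : eqv h (Sum.inl t) = Fin.cast h (Fin.castAdd _ t) := by
        refine Fin.ext ?_
        rw [eqv_inl_val]
        rfl
      have hτk : τ k = ε (Sum.inl t) := by
        simp [hτ, hcase]
      rw [hk, he, famF_left, Function.comp_apply, ← he, ← hk, hτk,
        Finset.piecewise_eq_of_mem _ _ _ (hεl t)]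
    · have hk : k = eqv h (Sum.inr t) := by
        rw [← hcase]; simp
      have he : eqv h (Sum.inr t) = Fin.cast h (Fin.natAdd _ t) := by
        refine Fin.ext ?_
        rw [eqv_inr_val]
        rfl
      have hτk : τ k = ε (Sum.inr t) := by
        simp [hτ, hcase]
      rw [hk, he, famF_right, Function.comp_apply, ← he, ← hk, hτk,
        Finset.piecewise_eq_of_notMem _ _ _ (hεr t)]
  have hperm := (wedge R (A × B) n).map_perm (s.piecewise a b) τ
  rw [← hfam] at hperm
  -- wedge (piecewise) = sign τ • wedge famF
  have hpw : wedge R (A × B) n (s.piecewise a b)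
      = Equiv.Perm.sign τ • wedge R (A × B) n (famF A B x y h) := by
    rw [hperm, Units.smul_def, Units.smul_def, ← mul_zsmul, ← Units.val_mul,
      Int.units_mul_self, Units.val_one, one_zsmul]
  have hphi : wedge R (A × B) n (famF A B x y h)
      = Phi R A B n (Pi.single i
          (Submodule.Quotient.mk (PiTensorProduct.tprod R x) ⊗ₜ[R]
           Submodule.Quotient.mk (PiTensorProduct.tprod R y))) := by
    rw [Phi_single, phiPart_tprod]
    rfl
  have : wedge R (A × B) n (s.piecewise a b) ∈ LinearMap.range (Phi R A B n) := by
    rw [hpw, hphi, Units.smul_def, ← map_zsmul (Phi R A B n)]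
    exact LinearMap.mem_range_self _ _
  exact this

lemma Phi_surjective : Function.Surjective (Phi R A B n) := by
  rw [← LinearMap.range_eq_top, eq_top_iff]
  rintro z -
  obtain ⟨t, rfl⟩ := Submodule.Quotient.mk_surjective _ z
  induction t using PiTensorProduct.induction_on with
  | smul_tprod r v =>
    rw [Submodule.Quotient.mk_smul]
    refine Submodule.smul_mem _ r ?_
    have hv : v = (fun k => (((v k).1, 0) : A × B)) + (fun k => ((0, (v k).2) : A × B)) := by
      funext k
      simp
    have : PiTensorProduct.tprod R v
        = ∑ s : Finset (Fin n), PiTensorProduct.tprod R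
            (s.piecewise (fun k => (((v k).1, 0) : A × B)) (fun k => ((0, (v k).2) : A × B))) := by
      conv_lhs => rw [hv]
      exact (PiTensorProduct.tprod R).map_add_univ _ _
    rw [this]
    rw [show (Submodule.Quotient.mk (∑ s : Finset (Fin n), PiTensorProduct.tprod R
        (s.piecewise (fun k => (((v k).1, 0) : A × B)) (fun k => ((0, (v k).2) : A × B))))
        : ExtPow R (A × B) n)
      = ∑ s : Finset (Fin n), Submodule.Quotient.mk (PiTensorProduct.tprod R
        (s.piecewise (fun k => (((v k).1, 0) : A × B)) (fun k => ((0, (v k).2) : A × B)))) from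
      map_sum (ExtRel R (A × B) n).mkQ _ _]
    exact Submodule.sum_mem _ fun s _ => piecewise_mem_range R A B n v s
  | add u w hu hw =>
    rw [Submodule.Quotient.mk_add]
    exact Submodule.add_mem _ hu hw

end Surj

/-- For `R`-modules `A`, `B` and `n : ℕ`, there is an `R`-module isomorphism
`Λ^n(A ⊕ B) ≅ ⊕_{i+j=n} Λ^i(A) ⊗_R Λ^j(B)` induced by concatenation of pure tensors
`(a_1⊗⋯⊗a_i) ⊗ (b_1⊗⋯⊗b_j) ↦ a_1⊗⋯⊗a_i⊗b_1⊗⋯⊗b_j`.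
The index set `{(i,j) : i+j=n}` is encoded as `i : Fin (n+1)` with `j = n - i`. -/
theorem extPower_prod (R A B : Type) [CommRing R] [AddCommGroup A] [Module R A]
    [AddCommGroup B] [Module R B] (n : ℕ) :
    ∃ e : (Π i : Fin (n + 1),
          ExtPow R A i.val ⊗[R] ExtPow R B (n - i.val)) ≃ₗ[R] ExtPow R (A × B) n,
      ∀ (i : Fin (n + 1)) (x : Fin i.val → A) (y : Fin (n - i.val) → B),
        e (Pi.single i
            (Submodule.Quotient.mk (tprod R x) ⊗ₜ[R] Submodule.Quotient.mk (tprod R y)))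
          = Submodule.Quotient.mk (tprod R fun k : Fin n =>
              Fin.append (fun j => ((x j, 0) : A × B)) (fun j => ((0, y j) : A × B))
                (Fin.cast (Nat.add_sub_cancel' (Nat.lt_succ_iff.mp i.isLt)).symm k)) := by
  have hleft : Function.LeftInverse (Psi R A B n) (Phi R A B n) := fun z => by
    rw [← LinearMap.comp_apply, Psi_Phi, LinearMap.id_apply]
  have hbij : Function.Bijective (Phi R A B n) :=
    ⟨hleft.injective, Phi_surjective R A B n⟩
  refine ⟨LinearEquiv.ofBijective (Phi R A B n) hbij, fun i x y => ?_⟩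
  show Phi R A B n (Pi.single i
      (Submodule.Quotient.mk (tprod R x) ⊗ₜ[R] Submodule.Quotient.mk (tprod R y))) = _
  rw [Phi_single]
  exact phiPart_tprod R A B (hIJ n i) x y
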